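/- Let S be a finite set with |S| = k ≥ 1, and let 0 < r < 1/log(2k). Then the probability that a uniformly random word of length n over the alphabet S ⊔ S⁻¹ (of size 2k) fails to contain some fixed-length subword of length ⌊r·log n⌋ tends to 0 as n → ∞; more precisely, the probability that at least one word of length ⌊r·log n⌋ over the alphabet does not appear as a (contiguous) subword of the random word of length n is at most (2k)^⌊r·log n⌋ · (1 - (2k)^{-⌊r·log n⌋})^⌊n/⌊r·log n⌋⌋, and this bound tends to 0 as n → ∞. -/

import Mathlib

open Filter

/-- A word `w` of length `L` appears as a contiguous subword of `v : Fin n → A`. -/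
def WordAppears {A : Type} {n L : ℕ} (v : Fin n → A) (w : Fin L → A) : Prop :=
  ∃ i : ℕ, ∃ h : i + L ≤ n, ∀ j : Fin L, v ⟨i + j, by have := j.isLt; omega⟩ = w j

lemma count_one {A : Type} [Fintype A] {n L : ℕ} (hL : 0 < L) (w : Fin L → A) :
    Set.ncard {v : Fin n → A | ¬ WordAppears v w} ≤
      (Fintype.card A ^ L - 1) ^ (n / L) * Fintype.card A ^ (n - (n / L) * L) := by
  classical
  set M := n / L with hM
  have hML : M * L ≤ n := Nat.div_mul_le_self n L
  have hidx : ∀ (i : Fin M) (j : Fin L), (i : ℕ) * L + (j : ℕ) < n := by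
    intro i j
    have h1 : (i : ℕ) * L + (j : ℕ) < ((i : ℕ) + 1) * L := by
      have := j.isLt; nlinarith
    have h2 : ((i : ℕ) + 1) * L ≤ M * L :=
      Nat.mul_le_mul_right L i.isLt
    omega
  set S : Set (Fin n → A) :=
    {v | ∀ i : Fin M, (fun j : Fin L => v ⟨(i : ℕ) * L + (j : ℕ), hidx i j⟩) ≠ w} with hS
  have hsub : {v : Fin n → A | ¬ WordAppears v w} ⊆ S := by
    intro v hv i hi
    apply hv
    refine ⟨(i : ℕ) * L, ?_, ?_⟩
    · have h2 : ((i : ℕ) + 1) * L ≤ M * L := Nat.mul_le_mul_right L i.isLt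
      have : ((i : ℕ) + 1) * L = (i : ℕ) * L + L := by ring
      omega
    · intro j
      exact congrFun hi j
  have hScard : S.ncard ≤ (Fintype.card A ^ L - 1) ^ M * Fintype.card A ^ (n - M * L) := by
    have : S.ncard = Nat.card S := Set.ncard_eq_toFinset_card' S ▸ by
      simp [Set.ncard, Nat.card]
    clear this
    have hidx2 : ∀ j : Fin (n - M * L), M * L + (j : ℕ) < n := by
      intro j; have := j.isLt; omega
    set f : S → (Fin M → {u : Fin L → A // u ≠ w}) × (Fin (n - M * L) → A) := fun v =>
      (fun i => ⟨fun j => v.1 ⟨(i : ℕ) * L + (j : ℕ), hidx i j⟩, v.2 i⟩,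
       fun j => v.1 ⟨M * L + (j : ℕ), hidx2 j⟩) with hf
    have hinj : Function.Injective f := by
      intro v v' hvv
      ext m
      have h1 := congrArg Prod.fst hvv
      have h2 := congrArg Prod.snd hvv
      by_cases hm : (m : ℕ) < M * L
      · have hiM : (m : ℕ) / L < M := Nat.div_lt_of_lt_mul (Nat.mul_comm M L ▸ hm)
        have hjL : (m : ℕ) % L < L := Nat.mod_lt _ hL
        have h3 := congrArg Subtype.val (congrFun h1 ⟨(m : ℕ) / L, hiM⟩)
        have h4 := congrFun h3 ⟨(m : ℕ) % L, hjL⟩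
        have hme : ((m : ℕ) / L) * L + (m : ℕ) % L = (m : ℕ) := by
          rw [Nat.mul_comm]; exact Nat.div_add_mod _ _
        simpa [hf, Fin.ext_iff, hme, Fin.eta] using h4
      · have h4 := congrFun h2 ⟨(m : ℕ) - M * L, by have := m.isLt; omega⟩
        have hme : M * L + ((m : ℕ) - M * L) = (m : ℕ) := by omega
        simpa [hf, hme] using h4
    have hcard := Nat.card_le_card_of_injective f hinj
    rw [← Nat.card_coe_set_eq]
    refine hcard.trans_eq ?_
    rw [Nat.card_eq_fintype_card, Fintype.card_prod, Fintype.card_fun, Fintype.card_fun]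
    simp [Fintype.card_subtype_compl, Fintype.card_subtype_eq, Fintype.card_fun]
  calc Set.ncard {v : Fin n → A | ¬ WordAppears v w} ≤ S.ncard :=
        Set.ncard_le_ncard hsub (Set.toFinite S)
    _ ≤ _ := hScard

lemma union_bound {A : Type} [Fintype A] {n L : ℕ} (hL : 0 < L) :
    Set.ncard {v : Fin n → A | ∃ w : Fin L → A, ¬ WordAppears v w} ≤
      Fintype.card A ^ L *
        ((Fintype.card A ^ L - 1) ^ (n / L) * Fintype.card A ^ (n - (n / L) * L)) := by
  classical
  set B := (Fintype.card A ^ L - 1) ^ (n / L) * Fintype.card A ^ (n - (n / L) * L) with hB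
  have h1 : {v : Fin n → A | ∃ w : Fin L → A, ¬ WordAppears v w} =
      ⋃ w : Fin L → A, {v : Fin n → A | ¬ WordAppears v w} := by
    ext v; simp
  rw [h1]
  calc (⋃ w : Fin L → A, {v : Fin n → A | ¬ WordAppears v w}).ncard
      ≤ ∑ w : Fin L → A, ({v : Fin n → A | ¬ WordAppears v w}).ncard := by
        rw [Set.ncard_eq_toFinset_card']
        set t : Finset (Fin n → A) :=
          Finset.univ.biUnion fun w : Fin L → A =>
            ({v : Fin n → A | ¬ WordAppears v w}).toFinset with ht
        have hsub : (⋃ w : Fin L → A, {v : Fin n → A | ¬ WordAppears v w}).toFinset ⊆ t := by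
          intro v hv
          simp only [Set.mem_toFinset, Set.mem_iUnion] at hv
          obtain ⟨w, hw⟩ := hv
          simp only [ht, Finset.mem_biUnion, Set.mem_toFinset]
          exact ⟨w, Finset.mem_univ w, hw⟩
        refine (Finset.card_le_card hsub).trans (Finset.card_biUnion_le.trans ?_)
        refine Finset.sum_le_sum fun w _ => ?_
        rw [Set.ncard_eq_toFinset_card']
    _ ≤ ∑ _w : Fin L → A, B := Finset.sum_le_sum fun w _ => count_one hL w
    _ = Fintype.card A ^ L * B := by
        rw [Finset.sum_const, Finset.card_univ, Fintype.card_fun, Fintype.card_fin, smul_eq_mul]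

lemma per_n {A : Type} [Fintype A] {k : ℕ} (hk : 1 ≤ k) (hA : Fintype.card A = 2 * k)
    (n L : ℕ) :
    (Set.ncard {v : Fin n → A | ∃ w : Fin L → A, ¬ WordAppears v w} : ℝ) / (2 * k : ℝ) ^ n
      ≤ (2 * k : ℝ) ^ L * (1 - ((2 * k : ℝ) ^ L)⁻¹) ^ (n / L) := by
  have hc2 : (2 : ℝ) ≤ (2 * k : ℝ) := by
    have : (1:ℝ) ≤ (k:ℝ) := by exact_mod_cast hk
    nlinarith
  have hcpos : (0 : ℝ) < (2 * k : ℝ) := by linarith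
  rcases Nat.eq_zero_or_pos L with hL | hL
  · subst hL
    have hempty : {v : Fin n → A | ∃ w : Fin 0 → A, ¬ WordAppears v w} = ∅ := by
      ext v
      simp only [Set.mem_setOf_eq, Set.mem_empty_iff_false, iff_false, not_exists, not_not]
      intro w
      exact ⟨0, by omega, fun j => absurd j.isLt (Nat.not_lt_zero _)⟩
    rw [hempty]
    simp
  · set M := n / L with hM
    have hML : M * L ≤ n := Nat.div_mul_le_self n L
    have hub := union_bound (A := A) (n := n) hL
    rw [hA] at hub
    have hone : 1 ≤ (2 * k) ^ L := Nat.one_le_pow _ _ (by omega)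
    have key : (Set.ncard {v : Fin n → A | ∃ w : Fin L → A, ¬ WordAppears v w} : ℝ) ≤
        (2 * k : ℝ) ^ L * ((2 * k : ℝ) ^ L - 1) ^ M * (2 * k : ℝ) ^ (n - M * L) := by
      have := (Nat.cast_le (α := ℝ)).mpr hub
      push_cast [Nat.cast_sub hone] at this
      calc (Set.ncard {v : Fin n → A | ∃ w : Fin L → A, ¬ WordAppears v w} : ℝ)
          ≤ _ := this
        _ = _ := by push_cast; ring
    have hpowpos : (0:ℝ) < (2 * k : ℝ) ^ n := pow_pos hcpos n
    rw [div_le_iff₀ hpowpos]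
    have h1 : (1 - ((2 * k : ℝ) ^ L)⁻¹) = ((2 * k : ℝ) ^ L - 1) / (2 * k : ℝ) ^ L := by
      field_simp
    have hpow : (2 * k : ℝ) ^ n = (2 * k : ℝ) ^ (M * L) * (2 * k : ℝ) ^ (n - M * L) := by
      rw [← pow_add]; congr 1; omega
    have hpow2 : ((2 * k : ℝ) ^ L) ^ M = (2 * k : ℝ) ^ (M * L) := by
      rw [← pow_mul, Nat.mul_comm]
    rw [h1, div_pow, hpow2, hpow]
    have hMLpos : (0:ℝ) < (2 * k : ℝ) ^ (M * L) := pow_pos hcpos _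
    calc (Set.ncard {v : Fin n → A | ∃ w : Fin L → A, ¬ WordAppears v w} : ℝ)
        ≤ (2 * k : ℝ) ^ L * ((2 * k : ℝ) ^ L - 1) ^ M * (2 * k : ℝ) ^ (n - M * L) := key
      _ = (2 * k : ℝ) ^ L * (((2 * k : ℝ) ^ L - 1) ^ M / (2 * k : ℝ) ^ (M * L)) *
            ((2 * k : ℝ) ^ (M * L) * (2 * k : ℝ) ^ (n - M * L)) := by
          field_simp

lemma rpow_div_log_atTop {b : ℝ} (hb : 0 < b) :
    Tendsto (fun x : ℝ => x ^ b / Real.log x) atTop atTop := by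
  have h0 : Tendsto (fun x : ℝ => Real.log x / x ^ b) atTop (nhds 0) :=
    (isLittleO_log_rpow_atTop hb).tendsto_div_nhds_zero
  have h1 : ∀ᶠ x : ℝ in atTop, Real.log x / x ^ b ∈ Set.Ioi (0:ℝ) := by
    filter_upwards [eventually_gt_atTop 1] with x hx
    exact div_pos (Real.log_pos hx) (Real.rpow_pos_of_pos (by linarith) b)
  have h2 : Tendsto (fun x : ℝ => Real.log x / x ^ b) atTop (nhdsWithin 0 (Set.Ioi 0)) :=
    tendsto_nhdsWithin_iff.mpr ⟨h0, h1⟩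
  have h3 := h2.inv_tendsto_nhdsGT_zero
  refine h3.congr (fun x => ?_)
  rw [Pi.inv_apply, inv_div]

lemma aux_atBot {a r : ℝ} (ha : 0 < a) (ha1 : a < 1) (hr : 0 < r) :
    Tendsto (fun x : ℝ => a * Real.log x - x ^ (1 - a) / (r * Real.log x) + 1) atTop atBot := by
  have hb : (0:ℝ) < 1 - a := by linarith
  have T := rpow_div_log_atTop (show (0:ℝ) < (1 - a) / 2 by linarith)
  have Tsq : Tendsto (fun x : ℝ => (x ^ ((1 - a) / 2) / Real.log x) ^ 2) atTop atTop :=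
    (T.atTop_mul_atTop₀ T).congr fun x => (sq _).symm
  have T2 : Tendsto (fun x : ℝ => x ^ (1 - a) / (Real.log x) ^ 2) atTop atTop := by
    refine Tsq.congr' ?_
    filter_upwards [eventually_gt_atTop (1:ℝ)] with x hx
    have hx0 : (0:ℝ) ≤ x := by linarith
    rw [div_pow]
    congr 1
    rw [← Real.rpow_natCast (x ^ ((1 - a) / 2)) 2, ← Real.rpow_mul hx0]
    norm_num
  have T3 : Tendsto (fun x : ℝ => (1 / r) * (x ^ (1 - a) / (Real.log x) ^ 2)) atTop atTop :=
    T2.const_mul_atTop (by positivity)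
  have T4 : Tendsto (fun x : ℝ => (1 / r) * (x ^ (1 - a) / (Real.log x) ^ 2) + (-a))
      atTop atTop := tendsto_atTop_add_const_right _ (-a) T3
  have T5 : Tendsto (fun x : ℝ =>
      Real.log x * ((1 / r) * (x ^ (1 - a) / (Real.log x) ^ 2) + (-a))) atTop atTop :=
    Real.tendsto_log_atTop.atTop_mul_atTop₀ T4
  have T6 : Tendsto (fun x : ℝ => x ^ (1 - a) / (r * Real.log x) - a * Real.log x)
      atTop atTop := by
    refine T5.congr' ?_
    filter_upwards [eventually_gt_atTop (1:ℝ)] with x hx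
    have hlx : 0 < Real.log x := Real.log_pos hx
    field_simp
    ring
  have T7 : Tendsto (fun x : ℝ => x ^ (1 - a) / (r * Real.log x) - a * Real.log x + (-1))
      atTop atTop := tendsto_atTop_add_const_right _ (-1) T6
  have T8 := tendsto_neg_atTop_atBot.comp T7
  refine T8.congr fun x => ?_
  simp only [Function.comp_apply]
  ring

lemma tendsto_main {k : ℕ} (hk : 1 ≤ k) {r : ℝ} (hr0 : 0 < r)
    (hr : r < 1 / Real.log (2 * k)) :
    Tendsto (fun n : ℕ => (2 * k : ℝ) ^ (⌊r * Real.log n⌋₊) *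
        (1 - ((2 * k : ℝ) ^ (⌊r * Real.log n⌋₊))⁻¹) ^ (n / ⌊r * Real.log n⌋₊))
      atTop (nhds 0) := by
  have hk1 : (1:ℝ) ≤ (k:ℝ) := by exact_mod_cast hk
  have hc2 : (2:ℝ) ≤ (2 * k : ℝ) := by nlinarith
  have hc0 : (0:ℝ) < (2 * k : ℝ) := by linarith
  have hlogc : 0 < Real.log (2 * k) := Real.log_pos (by linarith)
  set a : ℝ := r * Real.log (2 * k) with ha_def
  have ha : 0 < a := mul_pos hr0 hlogc
  have ha1 : a < 1 := by
    rw [lt_div_iff₀ hlogc] at hr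
    exact hr
  set g : ℕ → ℝ := fun n =>
    Real.exp (a * Real.log n - (n : ℝ) ^ (1 - a) / (r * Real.log n) + 1) with hg_def
  have hg : Tendsto g atTop (nhds 0) := by
    have := (aux_atBot ha ha1 hr0).comp tendsto_natCast_atTop_atTop
    exact Real.tendsto_exp_atBot.comp this
  have hlogn : Tendsto (fun n : ℕ => r * Real.log n) atTop atTop :=
    (Real.tendsto_log_atTop.comp tendsto_natCast_atTop_atTop).const_mul_atTop hr0
  have ev1 : ∀ᶠ n : ℕ in atTop, 1 ≤ r * Real.log n := hlogn.eventually_ge_atTop 1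
  have ev2 : ∀ᶠ n : ℕ in atTop, 2 ≤ n := eventually_ge_atTop 2
  have ev3 : ∀ᶠ n : ℕ in atTop, 1 ≤ (n : ℝ) / (r * Real.log n) := by
    have T0 := rpow_div_log_atTop (show (0:ℝ) < 1 by norm_num)
    have T1 : Tendsto (fun x : ℝ => x / Real.log x) atTop atTop := by
      refine T0.congr' ?_
      filter_upwards [eventually_ge_atTop (0:ℝ)] with x hx
      rw [Real.rpow_one]
    have T2 : Tendsto (fun x : ℝ => x / (r * Real.log x)) atTop atTop := by
      refine (T1.const_mul_atTop (show (0:ℝ) < 1 / r by positivity)).congr fun x => ?_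
      rw [div_mul_div_comm, one_mul]
    exact (T2.comp tendsto_natCast_atTop_atTop).eventually_ge_atTop 1
  refine squeeze_zero' ?_ ?_ hg
  · filter_upwards with n
    have h1 : (1:ℝ) ≤ (2 * k : ℝ) ^ (⌊r * Real.log n⌋₊) := one_le_pow₀ (by linarith)
    have h2 : ((2 * k : ℝ) ^ (⌊r * Real.log n⌋₊))⁻¹ ≤ 1 := inv_le_one_of_one_le₀ h1
    exact mul_nonneg (by positivity) (pow_nonneg (by linarith) _)
  · filter_upwards [ev1, ev2, ev3] with n h1 h2 h3
    have hn1 : (1:ℝ) < (n:ℝ) := by exact_mod_cast (by omega : 1 < n)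
    have hlg : 0 < Real.log n := Real.log_pos hn1
    set lg : ℝ := Real.log n with hlg_def
    set L : ℕ := ⌊r * lg⌋₊ with hL_def
    have hL1 : 1 ≤ L := Nat.le_floor (by exact_mod_cast h1)
    have hLle : (L:ℝ) ≤ r * lg := Nat.floor_le (by positivity)
    set M : ℕ := n / L with hM_def
    have hcLpos : (0:ℝ) < (2 * k : ℝ) ^ L := pow_pos hc0 L
    -- Step A
    have stepA : (2 * k : ℝ) ^ L ≤ Real.exp (a * lg) := by
      have e1 : (2 * k : ℝ) ^ L = Real.exp ((L:ℝ) * Real.log (2 * k)) := by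
        rw [← Real.log_pow, Real.exp_log (pow_pos hc0 L)]
      rw [e1, Real.exp_le_exp]
      have := mul_le_mul_of_nonneg_right hLle hlogc.le
      nlinarith
    -- Step B
    have stepB : Real.exp (-(a * lg)) ≤ ((2 * k : ℝ) ^ L)⁻¹ := by
      rw [Real.exp_neg]
      exact inv_anti₀ hcLpos stepA
    -- Step C
    have stepC : (n:ℝ) / (r * lg) - 1 ≤ (M:ℝ) := by
      have hdm := Nat.div_add_mod n L
      have hmod : n % L < L := Nat.mod_lt _ (by omega)
      have h5 : L * M + n % L = n := Nat.div_add_mod n L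
      have h6 : n < L * M + L := by omega
      have hcast : (n:ℝ) < (L:ℝ) * ((M:ℝ) + 1) := by
        have h7 : (n:ℝ) < (L:ℝ) * (M:ℝ) + (L:ℝ) := by exact_mod_cast h6
        nlinarith
      have hrlg : 0 < r * lg := by positivity
      have h4 : (n:ℝ) < (r * lg) * ((M:ℝ) + 1) := by
        have hM0 : (0:ℝ) ≤ (M:ℝ) + 1 := by positivity
        nlinarith
      have := (div_lt_iff₀ hrlg).mpr (by linarith : (n:ℝ) < ((M:ℝ) + 1) * (r * lg))
      linarith
    -- Step D
    have hinv1 : ((2 * k : ℝ) ^ L)⁻¹ ≤ 1 := inv_le_one_of_one_le₀ (one_le_pow₀ (by linarith))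
    have hinv0 : (0:ℝ) ≤ ((2 * k : ℝ) ^ L)⁻¹ := by positivity
    have stepD : 1 - ((2 * k : ℝ) ^ L)⁻¹ ≤ Real.exp (-((2 * k : ℝ) ^ L)⁻¹) := by
      have := Real.add_one_le_exp (-((2 * k : ℝ) ^ L)⁻¹)
      linarith
    -- Step E
    have stepE : (1 - ((2 * k : ℝ) ^ L)⁻¹) ^ M ≤ Real.exp (-(((2 * k : ℝ) ^ L)⁻¹ * M)) := by
      have e := pow_le_pow_left₀ (by linarith : (0:ℝ) ≤ 1 - ((2 * k : ℝ) ^ L)⁻¹) stepD M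
      have e2 : (Real.exp (-((2 * k : ℝ) ^ L)⁻¹)) ^ M =
          Real.exp (-(((2 * k : ℝ) ^ L)⁻¹ * M)) := by
        rw [← Real.exp_nat_mul]
        congr 1
        ring
      exact e.trans_eq e2
    -- combine
    have stepF : (2 * k : ℝ) ^ L * (1 - ((2 * k : ℝ) ^ L)⁻¹) ^ M ≤
        Real.exp (a * lg - ((2 * k : ℝ) ^ L)⁻¹ * M) := by
      calc (2 * k : ℝ) ^ L * (1 - ((2 * k : ℝ) ^ L)⁻¹) ^ M
          ≤ Real.exp (a * lg) * Real.exp (-(((2 * k : ℝ) ^ L)⁻¹ * M)) := by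
            refine mul_le_mul stepA stepE (pow_nonneg (by linarith) M) (Real.exp_nonneg _)
        _ = Real.exp (a * lg - ((2 * k : ℝ) ^ L)⁻¹ * M) := by
            rw [← Real.exp_add, ← sub_eq_add_neg]
    -- Step G
    have stepG : Real.exp (-(a * lg)) * ((n:ℝ) / (r * lg) - 1) ≤ ((2 * k : ℝ) ^ L)⁻¹ * M := by
      refine mul_le_mul stepB stepC (by linarith) hinv0
    -- Step H
    have hexplg : Real.exp lg = (n:ℝ) := Real.exp_log (by linarith)
    have hrpow : (n:ℝ) ^ (1 - a) = Real.exp (lg * (1 - a)) := by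
      rw [Real.rpow_def_of_pos (by linarith : (0:ℝ) < (n:ℝ))]
    have stepH : (n:ℝ) ^ (1 - a) / (r * lg) - 1 ≤
        Real.exp (-(a * lg)) * ((n:ℝ) / (r * lg) - 1) := by
      have e0 : Real.exp (-(a * lg)) * Real.exp lg = Real.exp (lg * (1 - a)) := by
        rw [← Real.exp_add]; congr 1; ring
      have e1 : Real.exp (-(a * lg)) * ((n:ℝ) / (r * lg)) = (n:ℝ) ^ (1 - a) / (r * lg) := by
        rw [hrpow, ← hexplg, ← e0]; ring
      have e2 : Real.exp (-(a * lg)) ≤ 1 := by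
        rw [Real.exp_le_one_iff]
        exact neg_nonpos.mpr (mul_pos ha hlg).le
      have e3 : Real.exp (-(a * lg)) * ((n:ℝ) / (r * lg) - 1) =
          (n:ℝ) ^ (1 - a) / (r * lg) - Real.exp (-(a * lg)) := by
        rw [mul_sub, e1, mul_one]
      rw [e3]
      linarith
    refine le_trans stepF ?_
    rw [hg_def]
    simp only []
    rw [Real.exp_le_exp]
    have : (n:ℝ) ^ (1 - a) / (r * lg) - 1 ≤ ((2 * k : ℝ) ^ L)⁻¹ * M :=
      le_trans stepH stepG
    linarith

/-- For an alphabet of size `2k` (`k ≥ 1`) and `0 < r < 1/log(2k)`, the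
probability that a uniformly random word of length `n` fails to contain some word of
length `⌊r log n⌋` is at most `(2k)^⌊r log n⌋ (1-(2k)^{-⌊r log n⌋})^⌊n/⌊r log n⌋⌋`,
and this bound tends to `0` as `n → ∞`. -/
theorem stmt_0 (k : ℕ) (hk : 1 ≤ k) (A : Type) [Fintype A]
    (hA : Fintype.card A = 2 * k) (r : ℝ) (hr0 : 0 < r)
    (hr : r < 1 / Real.log (2 * k)) :
    (∀ n : ℕ,
      ((Set.ncard {v : Fin n → A |
          ∃ w : Fin (⌊r * Real.log n⌋₊) → A, ¬ WordAppears v w} : ℝ) / (2 * k : ℝ) ^ n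
        ≤ (2 * k : ℝ) ^ (⌊r * Real.log n⌋₊) *
            (1 - ((2 * k : ℝ) ^ (⌊r * Real.log n⌋₊))⁻¹) ^ (n / ⌊r * Real.log n⌋₊)))
    ∧ Tendsto (fun n : ℕ => (2 * k : ℝ) ^ (⌊r * Real.log n⌋₊) *
          (1 - ((2 * k : ℝ) ^ (⌊r * Real.log n⌋₊))⁻¹) ^ (n / ⌊r * Real.log n⌋₊))
        atTop (nhds 0) := by
  exact ⟨fun n => per_n hk hA n _, tendsto_main hk hr0 hr⟩
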